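/- Let L be a Laurent polynomial ring over a field k with a monomial ordering ⪯ (total order on Laurent monomials compatible with multiplication). If {f_s}_{s∈S} is a finite family of nonzero Laurent polynomials whose leading monomials lm_⪯(f_s) are multiplicatively independent (the map ⊕_{s∈S} ℤ → L, (a_s) ↦ ∏ lm(f_s)^{a_s}, is injective), then the f_s are algebraically independent over k. -/

import Mathlib

open Finset

section Aux

variable {k : Type*} [Field k] {A : Type*} [AddCommGroup A] [LinearOrder A] [IsOrderedAddMonoid A]

/-- Coefficient/support control for a product of two bounded elements. -/
theorem aux_mul {p q : AddMonoidAlgebra k A} {a b : A}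
    (hpa : ∀ x ∈ p.coeff.support, x ≤ a) (hqb : ∀ x ∈ q.coeff.support, x ≤ b) :
    (∀ x ∈ (p * q).coeff.support, x ≤ a + b) ∧ (p * q).coeff (a + b) = p.coeff a * q.coeff b := by
  classical
  constructor
  · intro x hx
    obtain ⟨x1, hx1, x2, hx2, rfl⟩ := Finset.mem_add.mp (AddMonoidAlgebra.support_coeff_mul_subset p q hx)
    exact add_le_add (hpa _ hx1) (hqb _ hx2)
  · simp_rw [AddMonoidAlgebra.coeff_mul, Finsupp.sum]
    rw [Finset.sum_eq_single a, Finset.sum_eq_single b, if_pos rfl]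
    · refine fun x hx hne => if_neg (fun he => hne ?_)
      exact add_left_cancel he
    · intro h
      rw [if_pos rfl, Finsupp.notMem_support_iff.1 h, mul_zero]
    · refine fun x hx hne => Finset.sum_eq_zero (fun y hy => if_neg <| fun he => ?_)
      exact (add_lt_add_of_lt_of_le ((hpa x hx).lt_of_ne hne) (hqb y hy)).ne he
    · refine fun h => Finset.sum_eq_zero (fun y _ => ite_eq_right_iff.mpr <| fun _ => ?_)
      rw [Finsupp.notMem_support_iff.mp h, zero_mul]

theorem aux_one :
    (∀ x ∈ (1 : AddMonoidAlgebra k A).coeff.support, x ≤ 0) ∧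
      (1 : AddMonoidAlgebra k A).coeff 0 = 1 := by
  constructor
  · intro x hx
    rw [AddMonoidAlgebra.one_def, AddMonoidAlgebra.coeff_single, Finsupp.support_single_ne_zero _ one_ne_zero] at hx
    simp only [Finset.mem_singleton] at hx
    exact hx.le
  · rw [AddMonoidAlgebra.one_def, AddMonoidAlgebra.coeff_single, Finsupp.single_eq_same]

theorem aux_pow {p : AddMonoidAlgebra k A} {a : A}
    (hpa : ∀ x ∈ p.coeff.support, x ≤ a) (n : ℕ) :
    (∀ x ∈ (p ^ n).coeff.support, x ≤ n • a) ∧ (p ^ n).coeff (n • a) = (p.coeff a) ^ n := by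
  induction n with
  | zero => simpa using (aux_one (k := k) (A := A))
  | succ n ih =>
    have h := aux_mul (k := k) ih.1 hpa
    rw [succ_nsmul, pow_succ]
    exact ⟨h.1, by rw [h.2, ih.2, pow_succ]⟩

theorem aux_prod {ι : Type*} (t : Finset ι) (g : ι → AddMonoidAlgebra k A) (a : ι → A)
    (h : ∀ i ∈ t, ∀ x ∈ (g i).coeff.support, x ≤ a i) :
    (∀ x ∈ (∏ i ∈ t, g i).coeff.support, x ≤ ∑ i ∈ t, a i) ∧
      (∏ i ∈ t, g i).coeff (∑ i ∈ t, a i) = ∏ i ∈ t, (g i).coeff (a i) := by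
  classical
  induction t using Finset.induction_on with
  | empty => simpa using (aux_one (k := k) (A := A))
  | insert _ _ hi ih =>
    rename_i j t
    have ih' := ih (fun i hit => h i (Finset.mem_insert_of_mem hit))
    have hm := aux_mul (k := k) (h j (Finset.mem_insert_self j t)) ih'.1
    rw [Finset.prod_insert hi, Finset.sum_insert hi]
    exact ⟨hm.1, by rw [hm.2, ih'.2, Finset.prod_insert hi]⟩


theorem aux_main {k : Type*} [Field k] {A : Type*} [AddCommGroup A] [LinearOrder A] [IsOrderedAddMonoid A]
    {S : Type} [Fintype S]
    (f : S → AddMonoidAlgebra k A) (m : S → A)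
    (hmem : ∀ s, m s ∈ (f s).coeff.support)
    (hmax : ∀ s, ∀ x ∈ (f s).coeff.support, x ≤ m s)
    (hind : Function.Injective fun a : S →₀ ℤ => a.sum fun s c => c • m s) :
    AlgebraicIndependent k f := by
  classical
  have hMinj : Function.Injective (fun d : S →₀ ℕ => ∑ s, (d s : ℤ) • m s) := by
    intro d d' he
    have hmap : Function.Injective
        (fun d : S →₀ ℕ => Finsupp.mapRange (Nat.cast : ℕ → ℤ) Nat.cast_zero d) :=
      Finsupp.mapRange_injective _ _ Nat.cast_injective
    apply hmap
    apply hind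
    simp only
    rw [Finsupp.sum_fintype _ _ (fun s => by simp),
        Finsupp.sum_fintype _ _ (fun s => by simp)]
    simpa [Finsupp.mapRange_apply] using he
  have hTbound : ∀ d : S →₀ ℕ,
      (∀ x ∈ (∏ s, (f s) ^ (d s)).coeff.support, x ≤ ∑ s, (d s : ℤ) • m s) ∧
      (∏ s, (f s) ^ (d s)).coeff (∑ s, (d s : ℤ) • m s) = ∏ s, ((f s).coeff (m s)) ^ (d s) := by
    intro d
    obtain ⟨h1, h2⟩ := aux_prod (Finset.univ) (fun s => (f s) ^ (d s))
      (fun s => (d s : ℤ) • m s) (fun s _ x hx => by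
        have h3 := (aux_pow (hmax s) (d s)).1 x hx
        show x ≤ (d s : ℤ) • m s
        rw [natCast_zsmul]
        exact h3)
    refine ⟨fun x hx => h1 x hx, ?_⟩
    have h2' : (∏ s, (f s) ^ (d s)).coeff (∑ s, (d s : ℤ) • m s)
        = ∏ s, ((f s) ^ (d s)).coeff ((d s : ℤ) • m s) := h2
    rw [h2']
    refine Finset.prod_congr rfl fun s _ => ?_
    have h4 := (aux_pow (hmax s) (d s)).2
    rw [natCast_zsmul]
    exact h4
  have hTlead : ∀ d : S →₀ ℕ, (∏ s, (f s) ^ (d s)).coeff (∑ s, (d s : ℤ) • m s) ≠ 0 := by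
    intro d
    rw [(hTbound d).2]
    exact Finset.prod_ne_zero_iff.2 fun s _ =>
      pow_ne_zero _ (Finsupp.mem_support_iff.1 (hmem s))
  rw [algebraicIndependent_iff]
  intro p hp
  by_contra hp0
  have hsupp : p.support.Nonempty := MvPolynomial.support_nonempty.2 hp0
  obtain ⟨d₀, hd₀, hmaxd⟩ := Finset.exists_max_image p.support
    (fun d => ∑ s, (d s : ℤ) • m s) hsupp
  have heval : MvPolynomial.aeval f p =
      ∑ d ∈ p.support, (algebraMap k (AddMonoidAlgebra k A)) (p.coeff d)
        * ∏ s, (f s) ^ (d s) := by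
    rw [MvPolynomial.aeval_def, MvPolynomial.eval₂_eq']
  have h1 : ((MvPolynomial.aeval f p : AddMonoidAlgebra k A)).coeff
        (∑ s, (d₀ s : ℤ) • m s) =
      ∑ d ∈ p.support, p.coeff d * (∏ s, (f s) ^ (d s)).coeff (∑ s, (d₀ s : ℤ) • m s) := by
    rw [heval, AddMonoidAlgebra.coeff_sum, Finset.sum_apply']
    refine Finset.sum_congr rfl fun d _ => ?_
    have halg : (algebraMap k (AddMonoidAlgebra k A)) (p.coeff d)
        = AddMonoidAlgebra.single 0 (p.coeff d) := by
      rw [AddMonoidAlgebra.coe_algebraMap]; simp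
    rw [halg, AddMonoidAlgebra.coeff_single_zero_mul]
  rw [hp] at h1
  have h1 : (0 : k) = ∑ d ∈ p.support,
      p.coeff d * (∏ s, (f s) ^ (d s)).coeff (∑ s, (d₀ s : ℤ) • m s) := h1
  rw [Finset.sum_eq_single d₀ (fun d hd hne => ?_) (fun h => (h hd₀).elim)] at h1
  · exact (mul_ne_zero (MvPolynomial.mem_support_iff.1 hd₀) (hTlead d₀)) h1.symm
  · have hlt : (∑ s, (d s : ℤ) • m s) < ∑ s, (d₀ s : ℤ) • m s :=
      (hmaxd d hd).lt_of_ne (fun he => hne (hMinj he))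
    have hz : (∏ s, (f s) ^ (d s)).coeff (∑ s, (d₀ s : ℤ) • m s) = 0 := by
      rw [← Finsupp.notMem_support_iff]
      exact fun hmem' => hlt.not_ge ((hTbound d).1 _ hmem')
    rw [hz, mul_zero]

end Aux

/-- In the Laurent polynomial ring `L = k[x₁^{±1},…,x_N^{±1}]`, realized as the monoid
algebra of the group of Laurent monomials `Fin N →₀ ℤ`, let `⪯` be a monomial ordering
(a linear order compatible with multiplication of monomials, i.e. with addition of
exponent vectors).  If `{f_s}_{s ∈ S}` is a finite family of nonzero Laurent polynomials
whose leading monomials `m s` are multiplicatively independent (the map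
`⊕_{s∈S} ℤ → L`, `(a_s) ↦ ∏ lm(f_s)^{a_s}`, i.e. `(a_s) ↦ Σ a_s • m s` on exponent
vectors, is injective), then the `f_s` are algebraically independent over `k`. -/
theorem algIndep_of_mulIndep_leadingMonomials {k : Type*} [Field k] (N : ℕ)
    (S : Type) [Fintype S]
    (lin : LinearOrder (Fin N →₀ ℤ))
    (hcomp : ∀ a b c : Fin N →₀ ℤ, lin.le a b → lin.le (a + c) (b + c))
    (f : S → AddMonoidAlgebra k (Fin N →₀ ℤ))
    (hf : ∀ s, f s ≠ 0)
    (m : S → (Fin N →₀ ℤ))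
    (hmem : ∀ s, m s ∈ (f s).coeff.support)
    (hmax : ∀ s, ∀ m' ∈ (f s).coeff.support, lin.le m' (m s))
    (hind : Function.Injective fun a : S →₀ ℤ => a.sum fun s c => c • m s) :
    AlgebraicIndependent k f := by
  letI : LinearOrder (Fin N →₀ ℤ) := lin
  haveI hI : @IsOrderedAddMonoid (Fin N →₀ ℤ) _ lin.toPreorder :=
    @IsOrderedAddMonoid.mk _ _ lin.toPreorder (fun a b h c => by
        have := hcomp a b c h
        simpa [add_comm] using this)
      (fun a b h c => by rw [add_comm c, add_comm c]; exact hcomp a b c h)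
  exact @aux_main k _ (Fin N →₀ ℤ) _ lin hI S _ f m hmem (fun s x hx => hmax s x hx) hind
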